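/- Let T ∈ G, and suppose the characteristic polynomial of T factors over ℂ as (X − λ₁)(X − λ₂)(X − λ₃) with |λ₁| < 1, |λ₂| > 1, and |λ₃| = 1. Then λ₁, λ₂, λ₃ are all real, λ₃ = λ₁λ₂, and λ₃ ∈ {1, −1}. -/

import Mathlib

open Matrix Polynomial

/-- T belongs to G: the first two entries of the last column vanish and the (3,3) entry
equals the determinant of the upper-left 2×2 block. -/
def GPred (T : Matrix (Fin 3) (Fin 3) ℝ) : Prop :=
  T 0 2 = 0 ∧ T 1 2 = 0 ∧ T 2 2 = T 0 0 * T 1 1 - T 0 1 * T 1 0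

/-- if T ∈ G and its characteristic polynomial factors over ℂ as
(X−λ₁)(X−λ₂)(X−λ₃) with |λ₁| < 1, |λ₂| > 1 and |λ₃| = 1, then λ₁, λ₂, λ₃ are real,
λ₃ = λ₁λ₂, and λ₃ ∈ {1, −1}. -/
theorem stmt7 (T : Matrix (Fin 3) (Fin 3) ℝ) (hT : IsUnit T) (hG : GPred T)
    (l₁ l₂ l₃ : ℂ)
    (hfac : T.charpoly.map (algebraMap ℝ ℂ) = (X - C l₁) * (X - C l₂) * (X - C l₃))
    (h1 : ‖l₁‖ < 1) (h2 : 1 < ‖l₂‖) (h3 : ‖l₃‖ = 1) :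
    l₁.im = 0 ∧ l₂.im = 0 ∧ l₃.im = 0 ∧ l₃ = l₁ * l₂ ∧ (l₃ = 1 ∨ l₃ = -1) := by
  obtain ⟨h02, h12, h22⟩ := hG
  set f := algebraMap ℝ ℂ with hf
  -- determinant of T
  have hdet : T.det = (T 2 2) ^ 2 := by
    rw [Matrix.det_fin_three, h02, h12, h22]; ring
  -- product of roots equals determinant
  have hprod : (T.det : ℂ) = l₁ * l₂ * l₃ := by
    have h0 := congrArg (Polynomial.eval (0 : ℂ)) hfac
    rw [eval_map, Polynomial.eval₂_at_zero] at h0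
    rw [Matrix.det_eq_sign_charpoly_coeff]
    simp only [eval_mul, eval_sub, eval_X, eval_C, zero_sub] at h0
    push_cast
    rw [show f (T.charpoly.coeff 0) = ((T.charpoly.coeff 0 : ℝ) : ℂ) from rfl] at h0
    rw [show ((T.charpoly.coeff 0 : ℝ) : ℂ) = -(l₁ * l₂ * l₃) by rw [h0]; ring]
    norm_num [Fintype.card_fin]
  -- T 2 2 is a real root of the charpoly
  have hroot : T.charpoly.eval (T 2 2) = 0 := by
    have h : T.charpoly.eval (T 2 2) = ((charmatrix T).map (Polynomial.evalRingHom (T 2 2))).det := by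
      rw [Matrix.charpoly, ← Polynomial.coe_evalRingHom, RingHom.map_det]; rfl
    rw [h]
    apply Matrix.det_eq_zero_of_column_eq_zero 2
    intro i
    fin_cases i <;>
      simp [Matrix.map_apply, charmatrix_apply_eq, charmatrix_apply_ne, h02, h12,
        Matrix.charmatrix]
  -- transfer to ℂ
  have hrootC : ((T 2 2 : ℂ) - l₁) * ((T 2 2 : ℂ) - l₂) * ((T 2 2 : ℂ) - l₃) = 0 := by
    have h := congrArg (Polynomial.eval ((T 2 2 : ℂ))) hfac
    rw [eval_map] at h
    rw [show ((T 2 2 : ℝ) : ℂ) = f (T 2 2) from rfl] at h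
    rw [Polynomial.eval₂_at_apply, hroot] at h
    simp only [eval_mul, eval_sub, eval_X, eval_C, map_zero] at h
    rw [show ((T 2 2 : ℝ) : ℂ) = f (T 2 2) from rfl]
    exact h.symm
  -- conjugate of a root is a root
  have hconj : ∀ z : ℂ, (z - l₁) * (z - l₂) * (z - l₃) = 0 →
      ((starRingEnd ℂ) z - l₁) * ((starRingEnd ℂ) z - l₂) * ((starRingEnd ℂ) z - l₃) = 0 := by
    intro z hz
    have hcomp : (starRingEnd ℂ).comp f = f := by
      ext r; simp [hf, Complex.conj_ofReal]
    have h1' : (T.charpoly.map f).eval z = 0 := by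
      rw [hfac]; simp only [eval_mul, eval_sub, eval_X, eval_C]; exact hz
    have h2' : (T.charpoly.map f).eval ((starRingEnd ℂ) z) = 0 := by
      rw [eval_map] at h1' ⊢
      rw [← hcomp, ← Polynomial.hom_eval₂, h1', map_zero]
    rw [hfac] at h2'
    simpa only [eval_mul, eval_sub, eval_X, eval_C] using h2'
  have habs_conj : ∀ z : ℂ, ‖(starRingEnd ℂ) z‖ = ‖z‖ := fun z =>
    Complex.norm_conj z
  -- l₁ is real
  have him1 : (starRingEnd ℂ) l₁ = l₁ := by
    have h := hconj l₁ (by simp)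
    rcases mul_eq_zero.1 h with h' | h'
    · rcases mul_eq_zero.1 h' with h'' | h''
      · exact sub_eq_zero.1 h''
      · exfalso
        have := sub_eq_zero.1 h''
        rw [← this, habs_conj] at h2; linarith
    · exfalso
      have := sub_eq_zero.1 h'
      rw [← this, habs_conj] at h3; linarith
  have him1' : l₁.im = 0 := Complex.conj_eq_iff_im.1 him1
  -- l₂ is real
  have him2 : (starRingEnd ℂ) l₂ = l₂ := by
    have h := hconj l₂ (by simp)
    rcases mul_eq_zero.1 h with h' | h'
    · rcases mul_eq_zero.1 h' with h'' | h''
      · exfalso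
        have := sub_eq_zero.1 h''
        rw [← this, habs_conj] at h1; linarith
      · exact sub_eq_zero.1 h''
    · exfalso
      have := sub_eq_zero.1 h'
      rw [← this, habs_conj] at h3; linarith
  have him2' : l₂.im = 0 := Complex.conj_eq_iff_im.1 him2
  -- l₃ is real
  have him3 : (starRingEnd ℂ) l₃ = l₃ := by
    have h := hconj l₃ (by simp)
    rcases mul_eq_zero.1 h with h' | h'
    · rcases mul_eq_zero.1 h' with h'' | h''
      · exfalso
        have := sub_eq_zero.1 h''
        rw [← this, habs_conj] at h1; linarith
      · exfalso
        have := sub_eq_zero.1 h''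
        rw [← this, habs_conj] at h2; linarith
    · exact sub_eq_zero.1 h'
  have him3' : l₃.im = 0 := Complex.conj_eq_iff_im.1 him3
  -- nonvanishing of eigenvalues
  have hdet0 : T.det ≠ 0 := by
    have := hT.map (Matrix.detMonoidHom (n := Fin 3) (R := ℝ))
    simpa using this.ne_zero
  have hprodne : l₁ * l₂ * l₃ ≠ 0 := by
    rw [← hprod]; exact_mod_cast (by exact_mod_cast hdet0 : (T.det : ℂ) ≠ 0)
  have hl1ne : l₁ ≠ 0 := fun h => hprodne (by rw [h]; ring)
  have hl2ne : l₂ ≠ 0 := fun h => hprodne (by rw [h]; ring)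
  have hl3ne : l₃ ≠ 0 := fun h => hprodne (by rw [h]; ring)
  -- the key identity via T 2 2
  have hsq : ((T 2 2 : ℂ)) ^ 2 = l₁ * l₂ * l₃ := by
    rw [← hprod, hdet]; push_cast; ring
  have h312 : l₃ = l₁ * l₂ := by
    rcases mul_eq_zero.1 hrootC with h' | h'
    · rcases mul_eq_zero.1 h' with h'' | h''
      · exfalso
        have ht : (T 2 2 : ℂ) = l₁ := sub_eq_zero.1 h''
        rw [ht] at hsq
        have : l₁ = l₂ * l₃ := by
          have := hsq
          field_simp at this ⊢
          exact this
        have habs : ‖l₁‖ = ‖l₂‖ := by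
          rw [this, norm_mul, h3, mul_one]
        linarith
      · exfalso
        have ht : (T 2 2 : ℂ) = l₂ := sub_eq_zero.1 h''
        rw [ht] at hsq
        have : l₂ = l₁ * l₃ := by
          rw [sq] at hsq
          have h := hsq
          have : l₂ * l₂ = l₂ * (l₁ * l₃) := by linear_combination h
          exact mul_left_cancel₀ hl2ne this
        have habs : ‖l₂‖ = ‖l₁‖ := by
          rw [this, norm_mul, h3, mul_one]
        linarith
    · have ht : (T 2 2 : ℂ) = l₃ := sub_eq_zero.1 h'
      rw [ht] at hsq
      rw [sq] at hsq
      have : l₃ * l₃ = l₃ * (l₁ * l₂) := by linear_combination hsq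
      exact mul_left_cancel₀ hl3ne this
  refine ⟨him1', him2', him3', h312, ?_⟩
  -- l₃ = ±1
  have hre : l₃ = ((l₃.re : ℝ) : ℂ) := by
    apply Complex.ext <;> simp [him3']
  have habs3 : |l₃.re| = 1 := by
    rw [hre] at h3
    simpa using h3
  rcases abs_eq (by norm_num : (0:ℝ) ≤ 1) |>.1 habs3 with h | h
  · left; rw [hre, h]; norm_num
  · right; rw [hre, h]; norm_num
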